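/- arXiv:1611.02686 — 2 statements merged into one kernel-verified Lean document; each statement's English description precedes it below -/
import Mathlib

section
/- For the standard Gaussian density φ(x) = (2π)^{-p/2} e^{-‖x‖²/2} on ℝ^p, the Gaussian surface area of the sphere of radius r centered at the origin, i.e. ∫_{‖x‖=r} φ(x) dS(x) = (2π)^{-p/2} e^{-r²/2} r^{p-1} · p · π^{p/2} / Γ(p/2 + 1), is bounded above by a constant independent of the dimension p and the radius r ≥ 0. -/
open Real

-- max over r of r^n e^{-r^2/2}
private lemma max_lem (n : ℕ) {r : ℝ} (hr : 0 ≤ r) :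
    r ^ n * Real.exp (-r ^ 2 / 2) ≤ (n : ℝ) ^ ((n : ℝ) / 2) * Real.exp (-(n : ℝ) / 2) := by
  rcases Nat.eq_zero_or_pos n with rfl | hn
  · simp only [pow_zero, one_mul, Nat.cast_zero, zero_div, Real.rpow_zero, neg_zero,
      Real.exp_zero, mul_one]
    exact Real.exp_le_one_iff.mpr (by nlinarith [sq_nonneg r])
  have hn0 : (0:ℝ) < n := by exact_mod_cast hn
  have ht0 : (0:ℝ) ≤ r ^ 2 := sq_nonneg r
  set t : ℝ := r ^ 2 with ht
  have h1 : t / n ≤ Real.exp (t / n - 1) := by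
    have := Real.add_one_le_exp (t / n - 1); linarith
  have h2 : (t / n) ^ ((n:ℝ)/2) ≤ Real.exp (t / n - 1) ^ ((n:ℝ)/2) :=
    Real.rpow_le_rpow (by positivity) h1 (by positivity)
  have h3 : (t / n) ^ ((n:ℝ)/2) = t ^ ((n:ℝ)/2) / (n:ℝ) ^ ((n:ℝ)/2) :=
    Real.div_rpow ht0 hn0.le _
  have h4 : Real.exp (t / n - 1) ^ ((n:ℝ)/2) = Real.exp (t/2 - (n:ℝ)/2) := by
    rw [← Real.exp_mul]; congr 1; field_simp; try ring
  have h5 : r ^ n = t ^ ((n:ℝ)/2) := by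
    rw [ht, ← Real.rpow_natCast r n, ← Real.rpow_natCast r 2, ← Real.rpow_mul hr]
    congr 1; push_cast; ring
  have h6 : t ^ ((n:ℝ)/2) ≤ (n:ℝ) ^ ((n:ℝ)/2) * Real.exp (t/2 - (n:ℝ)/2) := by
    rw [h3, h4] at h2
    rw [div_le_iff₀ (by positivity)] at h2
    linarith [h2]
  calc r ^ n * Real.exp (-t / 2) = t ^ ((n:ℝ)/2) * Real.exp (-t/2) := by rw [h5]
    _ ≤ ((n:ℝ) ^ ((n:ℝ)/2) * Real.exp (t/2 - (n:ℝ)/2)) * Real.exp (-t/2) := by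
        apply mul_le_mul_of_nonneg_right h6 (Real.exp_nonneg _)
    _ = (n : ℝ) ^ ((n:ℝ)/2) * Real.exp (-(n:ℝ)/2) := by
        rw [mul_assoc, ← Real.exp_add]
        congr 2; ring

private lemma stirling_low (n : ℕ) :
    √π * (Real.sqrt (2*((n:ℝ)+1)) * (((n:ℝ)+1)/Real.exp 1)^(n+1)) ≤ (Nat.factorial (n+1) : ℝ) := by
  have h : √π ≤ Stirling.stirlingSeq (n+1) := by
    have := Stirling.stirlingSeq'_antitone.le_of_tendsto
      (Stirling.tendsto_stirlingSeq_sqrt_pi.comp (Filter.tendsto_add_atTop_nat 1)) n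
    simpa [Function.comp] using this
  rw [Stirling.stirlingSeq, le_div_iff₀ (by positivity)] at h
  convert h using 3 <;> push_cast <;> rfl

private lemma gautschi {a : ℝ} (ha : 0 < a) :
    Real.Gamma (a + 1/2) * Real.sqrt a ≤ Real.Gamma (a + 1) := by
  have h := Real.Gamma_mul_add_mul_le_rpow_Gamma_mul_rpow_Gamma (s := a) (t := a+1)
    (a := 1/2) (b := 1/2) ha (by linarith) one_half_pos one_half_pos (by norm_num)
  have h' : Real.Gamma (a + 1/2) ≤ Real.Gamma a ^ ((1:ℝ)/2) * Real.Gamma (a+1) ^ ((1:ℝ)/2) := by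
    convert h using 2; ring
  have hGa : 0 < Real.Gamma a := Real.Gamma_pos_of_pos ha
  have hGa1 : 0 < Real.Gamma (a+1) := Real.Gamma_pos_of_pos (by linarith)
  have hG12 : 0 < Real.Gamma (a + 1/2) := Real.Gamma_pos_of_pos (by linarith)
  have hadd : Real.Gamma (a+1) = a * Real.Gamma a := Real.Gamma_add_one ha.ne'
  have hsq : ∀ b : ℝ, 0 ≤ b → (b ^ ((1:ℝ)/2)) ^ 2 = b := by
    intro b hb
    rw [← Real.rpow_natCast (b ^ ((1:ℝ)/2)) 2, ← Real.rpow_mul hb]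
    norm_num
  refine le_of_pow_le_pow_left₀ two_ne_zero hGa1.le ?_
  have key : (Real.Gamma (a + 1/2)) ^ 2 ≤ Real.Gamma a * Real.Gamma (a+1) := by
    calc (Real.Gamma (a + 1/2)) ^ 2
        ≤ (Real.Gamma a ^ ((1:ℝ)/2) * Real.Gamma (a+1) ^ ((1:ℝ)/2)) ^ 2 := by
          apply pow_le_pow_left₀ hG12.le h'
      _ = Real.Gamma a * Real.Gamma (a+1) := by
          rw [mul_pow, hsq _ hGa.le, hsq _ hGa1.le]
  have hsa : Real.sqrt a ^ 2 = a := Real.sq_sqrt ha.le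
  calc (Real.Gamma (a + 1/2) * Real.sqrt a) ^ 2
      = (Real.Gamma (a + 1/2)) ^ 2 * a := by rw [mul_pow, hsa]
    _ ≤ (Real.Gamma a * Real.Gamma (a+1)) * a := by
        apply mul_le_mul_of_nonneg_right key ha.le
    _ = Real.Gamma (a+1) ^ 2 := by rw [hadd]; ring

private lemma gamma_low (n : ℕ) :
    (2:ℝ) ^ (-((n:ℝ)+1)/2) * (√π * ((n:ℝ)+1) ^ ((((n:ℝ)+1)+1)/2) * Real.exp (-((n:ℝ)+1)/2))
      ≤ Real.Gamma (((n:ℝ)+1)/2 + 1) := by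
  have hn0 : (0:ℝ) ≤ n := n.cast_nonneg
  set x : ℝ := (n:ℝ) + 1 with hxdef
  have hx0 : 0 < x := by rw [hxdef]; positivity
  have hG : 0 < Real.Gamma (x/2 + 1) := Real.Gamma_pos_of_pos (by linarith)
  set G := Real.Gamma (x/2+1) with hGdef
  refine le_of_pow_le_pow_left₀ two_ne_zero hG.le ?_
  have e1 : (2:ℝ)^(-x/2) * (2:ℝ)^(-x/2) = (2:ℝ)^(-x) := by
    rw [← Real.rpow_add two_pos]; congr 1; ring
  have e2 : Real.exp (-x/2) * Real.exp (-x/2) = Real.exp (-x) := by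
    rw [← Real.exp_add]; congr 1; ring
  have e3 : x^((x+1)/2) * x^((x+1)/2) = x^(x+1) := by
    rw [← Real.rpow_add hx0]; congr 1; ring
  have hpp : √π * √π = π := Real.mul_self_sqrt pi_pos.le
  have hL2 : ((2:ℝ)^(-x/2) * (√π * x ^ ((x+1)/2) * Real.exp (-x/2)))^2
      = 2^(-x) * (π * (x^(x+1) * Real.exp (-x))) := by
    calc ((2:ℝ)^(-x/2) * (√π * x ^ ((x+1)/2) * Real.exp (-x/2)))^2
        = ((2:ℝ)^(-x/2) * (2:ℝ)^(-x/2)) * ((√π * √π) *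
            ((x^((x+1)/2) * x^((x+1)/2)) * (Real.exp (-x/2) * Real.exp (-x/2)))) := by ring
      _ = 2^(-x) * (π * (x^(x+1) * Real.exp (-x))) := by rw [e1, e2, e3, hpp]
  have hgaut := gautschi (a := x/2) (by positivity)
  have hdup := Real.Gamma_mul_Gamma_add_half (x/2)
  rw [show 2*(x/2) = x from by ring] at hdup
  have hΓx : Real.Gamma x = (n.factorial : ℝ) := by
    rw [hxdef]; exact Real.Gamma_nat_eq_factorial n
  have hGadd : G = (x/2) * Real.Gamma (x/2) := by
    rw [hGdef]; exact Real.Gamma_add_one (by positivity)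
  have hprod : G * Real.Gamma (x/2 + 1/2) = ((n+1).factorial : ℝ) * 2^(-x) * √π := by
    have hfac : ((n+1).factorial : ℝ) = x * (n.factorial : ℝ) := by
      rw [Nat.factorial_succ]; push_cast; rw [hxdef]
    have h2x : (2:ℝ)^(1-x) = 2 * (2:ℝ)^(-x) := by
      rw [show (1:ℝ)-x = 1 + -x from by ring, Real.rpow_add two_pos, Real.rpow_one]
    rw [hGadd, mul_assoc, hdup, hΓx, hfac, h2x]; ring
  have hstir := stirling_low n
  have hrpow : ((x/Real.exp 1))^(n+1) = x^(x:ℝ) * Real.exp (-x) := by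
    have h1 : (x/Real.exp 1)^(n+1) = (x/Real.exp 1)^((((n+1):ℕ)):ℝ) :=
      (Real.rpow_natCast _ _).symm
    rw [h1, show (((n+1):ℕ):ℝ) = x from by push_cast; rw [hxdef],
      Real.div_rpow hx0.le (Real.exp_pos 1).le, Real.exp_one_rpow, Real.exp_neg,
      div_eq_mul_inv]
  rw [show (2:ℝ)*((n:ℝ)+1) = 2*x from by rw [hxdef]] at hstir
  rw [show ((n:ℝ)+1)/Real.exp 1 = x/Real.exp 1 from by rw [hxdef]] at hstir
  rw [hrpow] at hstir
  have main : 2^(-x) * (π * (x^(x+1) * Real.exp (-x))) ≤ G * G := by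
    have s1 : G * (Real.Gamma (x/2+1/2) * Real.sqrt (x/2)) ≤ G * G := by
      apply mul_le_mul_of_nonneg_left _ hG.le
      convert hgaut using 3 <;> ring
    have s2 : G * (Real.Gamma (x/2+1/2) * Real.sqrt (x/2))
        = ((n+1).factorial : ℝ) * 2^(-x) * √π * Real.sqrt (x/2) := by
      rw [← mul_assoc, hprod]
    have s3 : (√π * (Real.sqrt (2*x) * (x^(x:ℝ) * Real.exp (-x)))) * 2^(-x) * √π * Real.sqrt (x/2)
        ≤ ((n+1).factorial : ℝ) * 2^(-x) * √π * Real.sqrt (x/2) := by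
      have h2 : (0:ℝ) ≤ 2^(-x) * √π * Real.sqrt (x/2) := by positivity
      calc (√π * (Real.sqrt (2*x) * (x^(x:ℝ) * Real.exp (-x)))) * 2^(-x) * √π * Real.sqrt (x/2)
          = (√π * (Real.sqrt (2*x) * (x^(x:ℝ) * Real.exp (-x)))) * (2^(-x) * √π * Real.sqrt (x/2)) := by ring
        _ ≤ ((n+1).factorial : ℝ) * (2^(-x) * √π * Real.sqrt (x/2)) :=
            mul_le_mul_of_nonneg_right hstir h2
        _ = ((n+1).factorial : ℝ) * 2^(-x) * √π * Real.sqrt (x/2) := by ring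
    have hsq2 : Real.sqrt (2*x) * Real.sqrt (x/2) = x := by
      rw [← Real.sqrt_mul (by linarith) (x/2), show 2*x*(x/2) = x^2 from by ring,
        Real.sqrt_sq hx0.le]
    have hpp : √π * √π = π := Real.mul_self_sqrt pi_pos.le
    have hxx1 : x^(x:ℝ) * x = x^(x+1) := by
      conv_rhs => rw [Real.rpow_add hx0, Real.rpow_one]
    have s4a : (√π * (Real.sqrt (2*x) * (x^(x:ℝ) * Real.exp (-x)))) * 2^(-x) * √π * Real.sqrt (x/2)
        = (√π * √π) * ((Real.sqrt (2*x) * Real.sqrt (x/2)) * (x^(x:ℝ) * Real.exp (-x))) * 2^(-x) := by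
      ring
    have s4 : (√π * (Real.sqrt (2*x) * (x^(x:ℝ) * Real.exp (-x)))) * 2^(-x) * √π * Real.sqrt (x/2)
        = 2^(-x) * (π * (x^(x+1) * Real.exp (-x))) := by
      rw [s4a, hpp, hsq2, ← hxx1]; ring
    linarith [s1, s3]
  calc ((2:ℝ)^(-x/2) * (√π * x ^ ((x+1)/2) * Real.exp (-x/2)))^2
      = 2^(-x) * (π * (x^(x+1) * Real.exp (-x))) := hL2
    _ ≤ G * G := main
    _ = G^2 := (pow_two G).symm

/-- The Gaussian surface area of the centered sphere of radius `r` in `ℝ^p`,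
`(2π)^{-p/2} e^{-r²/2} r^{p-1} · p · π^{p/2} / Γ(p/2 + 1)`, is bounded above by a
constant independent of `p ≥ 1` and `r ≥ 0`. -/
theorem stmt5 :
    ∃ C : ℝ, 0 < C ∧ ∀ (p : ℕ), 1 ≤ p → ∀ r : ℝ, 0 ≤ r →
      (2 * π) ^ (-(p : ℝ) / 2) * Real.exp (-r ^ 2 / 2) * r ^ (p - 1) * p
          * π ^ ((p : ℝ) / 2) / Real.Gamma ((p : ℝ) / 2 + 1) ≤ C := by
  refine ⟨2, by norm_num, fun p hp r hr => ?_⟩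
  have hπ : 0 < π := pi_pos
  obtain ⟨n, rfl⟩ : ∃ n, p = n + 1 := ⟨p - 1, (Nat.succ_pred_eq_of_pos hp).symm⟩
  have hglow := gamma_low n
  have hn0 : (0:ℝ) ≤ n := n.cast_nonneg
  rw [show ((n + 1 : ℕ) : ℝ) = (n:ℝ) + 1 from by push_cast; ring, Nat.add_sub_cancel]
  set x : ℝ := (n:ℝ) + 1 with hxdef
  have hx1 : 1 ≤ x := by rw [hxdef]; linarith
  have hx0 : 0 < x := by linarith
  have hG : 0 < Real.Gamma (x/2 + 1) := Real.Gamma_pos_of_pos (by linarith)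
  rw [div_le_iff₀ hG]
  have hxn : (n:ℝ) = x - 1 := by rw [hxdef]; ring
  have hmax : Real.exp (-r^2/2) * r ^ n ≤ (x-1) ^ ((x-1)/2) * Real.exp (-(x-1)/2) := by
    rw [mul_comm, ← hxn]
    have := max_lem n hr
    convert this using 3 <;> ring
  have hA : (2*π)^(-x/2) * π^(x/2) = (2:ℝ)^(-x/2) := by
    rw [Real.mul_rpow two_pos.le hπ.le, mul_assoc, ← Real.rpow_add hπ,
      show -x/2 + x/2 = (0:ℝ) from by ring, Real.rpow_zero, mul_one]
  have hehalf : Real.exp ((1:ℝ)/2) ≤ 2 := by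
    have h1 : Real.exp ((1:ℝ)/2) * Real.exp ((1:ℝ)/2) = Real.exp 1 := by
      rw [← Real.exp_add]; norm_num
    nlinarith [Real.exp_pos ((1:ℝ)/2), Real.exp_one_lt_d9]
  have hsp : 1 ≤ √π := by
    rw [show (1:ℝ) = √1 from Real.sqrt_one.symm]
    exact Real.sqrt_le_sqrt (by linarith [pi_gt_three])
  have step : ((x-1)^((x-1)/2) * Real.exp (-(x-1)/2)) * x
      ≤ 2 * (√π * x ^ ((x+1)/2) * Real.exp (-x/2)) := by
    have e1 : Real.exp (-(x-1)/2) = Real.exp (-x/2) * Real.exp ((1:ℝ)/2) := by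
      rw [← Real.exp_add]; congr 1; ring
    have e2 : (x-1)^((x-1)/2) ≤ x^((x-1)/2) :=
      Real.rpow_le_rpow (by linarith) (by linarith) (by linarith)
    have e3 : x^((x-1)/2) * x = x ^ ((x+1)/2) := by
      rw [show (x+1)/2 = (x-1)/2 + 1 from by ring, Real.rpow_add hx0, Real.rpow_one]
    calc ((x-1)^((x-1)/2) * Real.exp (-(x-1)/2)) * x
        ≤ (x^((x-1)/2) * Real.exp (-(x-1)/2)) * x := by
          apply mul_le_mul_of_nonneg_right (mul_le_mul_of_nonneg_right e2 (Real.exp_nonneg _)) hx0.le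
      _ = (x^((x-1)/2) * x) * Real.exp (-x/2) * Real.exp ((1:ℝ)/2) := by rw [e1]; ring
      _ = x^((x+1)/2) * Real.exp (-x/2) * Real.exp ((1:ℝ)/2) := by rw [e3]
      _ ≤ x^((x+1)/2) * Real.exp (-x/2) * (2 * √π) := by
          apply mul_le_mul_of_nonneg_left _ (by positivity)
          nlinarith
      _ = 2 * (√π * x ^ ((x+1)/2) * Real.exp (-x/2)) := by ring
  calc (2*π)^(-x/2) * Real.exp (-r^2/2) * r^n * x * π^(x/2)
      = ((2*π)^(-x/2) * π^(x/2)) * ((Real.exp (-r^2/2) * r^n) * x) := by ring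
    _ = (2:ℝ)^(-x/2) * ((Real.exp (-r^2/2) * r^n) * x) := by rw [hA]
    _ ≤ (2:ℝ)^(-x/2) * (((x-1)^((x-1)/2) * Real.exp (-(x-1)/2)) * x) := by
        apply mul_le_mul_of_nonneg_left (mul_le_mul_of_nonneg_right hmax hx0.le) (by positivity)
    _ ≤ (2:ℝ)^(-x/2) * (2 * (√π * x ^ ((x+1)/2) * Real.exp (-x/2))) := by
        apply mul_le_mul_of_nonneg_left step (by positivity)
    _ = 2 * ((2:ℝ)^(-x/2) * (√π * x ^ ((x+1)/2) * Real.exp (-x/2))) := by ring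
    _ ≤ 2 * Real.Gamma (x/2 + 1) := by
        have : (2:ℝ)^(-x/2) * (√π * x ^ ((x+1)/2) * Real.exp (-x/2)) ≤ Real.Gamma (x/2+1) := by
          convert hglow using 3 <;> rw [hxdef]
        linarith
end

section
/- Coverage bound from survival-function approximation and anti-concentration: Let T be a real random variable with continuous distribution whose survival function satisfies |P(T > t) − G(t)| ≤ Δ for all t, where G is the (conditional) survival function of a bootstrap statistic with upper quantile Q(α) = inf{t : G(t) ≤ α}, and suppose P(t < T ≤ t + ε) ≤ Δ + cε for all t, ε > 0. Then for all α ∈ (0,1): |P(T > Q(α)) − α| ≤ 2Δ (in the continuous case, where quantile crossing errors vanish). -/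
open MeasureTheory Filter Topology

/-- Coverage bound: let `T` be a real random variable with continuous
distribution whose survival function is within `Δ` of the survival function `G` of a
bootstrap statistic `T′`, with upper quantile `Q(α) = inf{t : G t ≤ α}`, and assume the
anti-concentration bound `P(t < T ≤ t + ε) ≤ Δ + cε`. Then
`|P(T > Q(α)) − α| ≤ 2Δ` for all `α ∈ (0,1)`. -/
theorem stmt16
    {Ω Ω' : Type*} [MeasurableSpace Ω] [MeasurableSpace Ω']
    {μ : Measure Ω} {ν : Measure Ω'}
    [IsProbabilityMeasure μ] [IsProbabilityMeasure ν]
    (T : Ω → ℝ) (T' : Ω' → ℝ) (hT : Measurable T) (hT' : Measurable T')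
    (hTcont : ∀ t : ℝ, μ {ω | T ω = t} = 0)
    (G : ℝ → ℝ) (hG : G = fun t => (ν {ω | T' ω > t}).toReal)
    (Δ c : ℝ) (hΔ : 0 ≤ Δ) (hc : 0 < c)
    (hFG : ∀ t, |(μ {ω | T ω > t}).toReal - G t| ≤ Δ)
    (hanti : ∀ t ε : ℝ, 0 < ε →
      (μ {ω | t < T ω ∧ T ω ≤ t + ε}).toReal ≤ Δ + c * ε)
    (Q : ℝ → ℝ) (hQ : Q = fun α => sInf {t | G t ≤ α})
    (α : ℝ) (hα : α ∈ Set.Ioo (0 : ℝ) 1) :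
    |(μ {ω | T ω > Q α}).toReal - α| ≤ 2 * Δ := by
  obtain ⟨hα0, hα1⟩ := hα
  have hGmono : ∀ s t : ℝ, s ≤ t → ν {ω | T' ω > t} ≤ ν {ω | T' ω > s} := by
    intro s t hst
    exact measure_mono (fun ω hω => lt_of_le_of_lt hst hω)
  have hνfin : ∀ t : ℝ, ν {ω | T' ω > t} ≠ ⊤ := fun t => measure_ne_top ν _
  set S : Set ℝ := {t | G t ≤ α} with hS
  -- S is nonempty
  have hne : S.Nonempty := by
    have hm : Antitone (fun n : ℕ => {ω | T' ω > (n : ℝ)}) := by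
      intro a b hab ω hω
      simp only [Set.mem_setOf_eq] at hω ⊢
      exact lt_of_le_of_lt (by exact_mod_cast hab) hω
    have hmeas : ∀ n : ℕ, NullMeasurableSet {ω | T' ω > (n : ℝ)} ν :=
      fun n => (measurableSet_lt measurable_const hT').nullMeasurableSet
    have hint : (⋂ n : ℕ, {ω | T' ω > (n : ℝ)}) = ∅ := by
      ext ω
      simp only [Set.mem_iInter, Set.mem_setOf_eq, Set.mem_empty_iff_false, iff_false, not_forall]
      obtain ⟨n, hn⟩ := exists_nat_gt (T' ω)
      exact ⟨n, not_lt.2 hn.le⟩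
    have htend : Tendsto (fun n : ℕ => ν {ω | T' ω > (n : ℝ)}) atTop (𝓝 0) := by
      have := tendsto_measure_iInter_atTop (μ := ν) hmeas hm ⟨0, hνfin (0 : ℕ)⟩
      rwa [hint, measure_empty] at this
    have : ∀ᶠ n : ℕ in atTop, ν {ω | T' ω > (n : ℝ)} < ENNReal.ofReal α :=
      htend.eventually_lt_const (by simpa using hα0)
    obtain ⟨n, hn⟩ := this.exists
    refine ⟨(n : ℝ), ?_⟩
    simp only [hS, hG, Set.mem_setOf_eq]
    exact le_of_lt ((ENNReal.lt_ofReal_iff_toReal_lt (hνfin _)).1 hn)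
  -- S is bounded below
  obtain ⟨m, hm⟩ : ∃ m : ℕ, ENNReal.ofReal α < ν {ω | T' ω > -(m : ℝ)} := by
    have hmono : Monotone (fun n : ℕ => {ω | T' ω > -(n : ℝ)}) := by
      intro a b hab ω hω
      simp only [Set.mem_setOf_eq] at hω ⊢
      refine lt_of_le_of_lt ?_ hω
      simp only [neg_le_neg_iff]
      exact_mod_cast hab
    have huniv : (⋃ n : ℕ, {ω | T' ω > -(n : ℝ)}) = Set.univ := by
      ext ω
      simp only [Set.mem_iUnion, Set.mem_setOf_eq, Set.mem_univ, iff_true]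
      obtain ⟨n, hn⟩ := exists_nat_gt (-(T' ω))
      exact ⟨n, by linarith⟩
    have htend : Tendsto (fun n : ℕ => ν {ω | T' ω > -(n : ℝ)}) atTop (𝓝 1) := by
      have := tendsto_measure_iUnion_atTop (μ := ν) hmono
      rwa [huniv, measure_univ] at this
    have : ∀ᶠ n : ℕ in atTop, ENNReal.ofReal α < ν {ω | T' ω > -(n : ℝ)} :=
      htend.eventually_const_lt (by
        rw [← ENNReal.ofReal_one]
        exact (ENNReal.ofReal_lt_ofReal_iff_of_nonneg hα0.le).2 hα1)
    exact this.exists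
  have hbdd : BddBelow S := by
    refine ⟨-(m : ℝ), fun t ht => ?_⟩
    by_contra h
    push_neg at h
    have h1 : ν {ω | T' ω > -(m : ℝ)} ≤ ν {ω | T' ω > t} := hGmono t _ h.le
    have h2 : G t ≤ α := ht
    rw [hG] at h2
    have := (ENNReal.ofReal_lt_iff_lt_toReal hα0.le (hνfin t)).1 (lt_of_lt_of_le hm h1)
    linarith
  rw [hQ]
  set q : ℝ := sInf S with hq
  have h_upper : ∀ t : ℝ, q < t → G t ≤ α := by
    intro t ht
    obtain ⟨s, hsS, hst⟩ := exists_lt_of_csInf_lt hne ht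
    have : G t ≤ G s := by
      rw [hG]
      exact ENNReal.toReal_mono (hνfin s) (hGmono s t hst.le)
    exact this.trans hsS
  have h_lower : ∀ t : ℝ, t < q → α < G t := by
    intro t ht
    by_contra h
    push_neg at h
    exact absurd (csInf_le hbdd (by exact h : t ∈ S)) (not_le.2 ht)
  -- upper bound
  have hub : μ {ω | T ω > q} ≤ ENNReal.ofReal (α + Δ) := by
    set A : ℕ → Set Ω := fun n => {ω | T ω > q + 1 / (n + 1)} with hA
    have hmono : Monotone A := by
      intro a b hab ω hω
      simp only [hA, Set.mem_setOf_eq] at hω ⊢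
      have h1 : (1 : ℝ) / (b + 1) ≤ 1 / (a + 1) := by
        apply one_div_le_one_div_of_le (by positivity)
        have : (a : ℝ) ≤ b := by exact_mod_cast hab
        linarith
      linarith
    have hunion : {ω | T ω > q} = ⋃ n : ℕ, A n := by
      ext ω
      simp only [hA, Set.mem_iUnion, Set.mem_setOf_eq]
      constructor
      · intro h
        obtain ⟨n, hn⟩ := exists_nat_one_div_lt (show (0:ℝ) < T ω - q by linarith)
        exact ⟨n, by push_cast at hn ⊢; linarith⟩
      · rintro ⟨n, hn⟩
        have : (0:ℝ) < 1 / ((n : ℝ) + 1) := by positivity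
        linarith
    have htend : Tendsto (fun n => μ (A n)) atTop (𝓝 (μ {ω | T ω > q})) := by
      have := tendsto_measure_iUnion_atTop (μ := μ) hmono
      rwa [← hunion] at this
    refine le_of_tendsto htend (Eventually.of_forall fun n => ?_)
    have hGt : G (q + 1 / (n + 1)) ≤ α := h_upper _ (by
      have : (0:ℝ) < 1 / ((n : ℝ) + 1) := by positivity
      linarith)
    have hF := abs_sub_le_iff.1 (hFG (q + 1 / (n + 1)))
    refine (ENNReal.le_ofReal_iff_toReal_le (measure_ne_top μ _) (by linarith)).2 ?_
    have := hF.1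
    linarith
  -- lower bound
  have hlb : ENNReal.ofReal (α - Δ) ≤ μ {ω | T ω > q} := by
    set B : ℕ → Set Ω := fun n => {ω | T ω > q - 1 / (n + 1)} with hB
    have hanti' : Antitone B := by
      intro a b hab ω hω
      simp only [hB, Set.mem_setOf_eq] at hω ⊢
      have h1 : (1 : ℝ) / (b + 1) ≤ 1 / (a + 1) := by
        apply one_div_le_one_div_of_le (by positivity)
        have : (a : ℝ) ≤ b := by exact_mod_cast hab
        linarith
      linarith
    have hmeasB : ∀ n : ℕ, NullMeasurableSet (B n) μ :=
      fun n => (measurableSet_lt measurable_const hT).nullMeasurableSet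
    have hinter : (⋂ n : ℕ, B n) = {ω | T ω ≥ q} := by
      ext ω
      simp only [hB, Set.mem_iInter, Set.mem_setOf_eq]
      constructor
      · intro h
        by_contra hc'
        push_neg at hc'
        obtain ⟨n, hn⟩ := exists_nat_one_div_lt (show (0:ℝ) < q - T ω by linarith)
        have := h n
        push_cast at hn
        linarith
      · intro h n
        have : (0:ℝ) < 1 / ((n : ℝ) + 1) := by positivity
        linarith
    have htend : Tendsto (fun n => μ (B n)) atTop (𝓝 (μ {ω | T ω ≥ q})) := by
      have := tendsto_measure_iInter_atTop (μ := μ) hmeasB hanti' ⟨0, measure_ne_top μ _⟩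
      rwa [hinter] at this
    have hgeset : μ {ω | T ω ≥ q} = μ {ω | T ω > q} := by
      refine le_antisymm ?_ (measure_mono fun ω hω => le_of_lt (show q < T ω from hω))
      calc μ {ω | T ω ≥ q} ≤ μ ({ω | T ω > q} ∪ {ω | T ω = q}) := by
            refine measure_mono fun ω hω => ?_
            rcases lt_or_eq_of_le (show q ≤ T ω from hω) with h | h
            · exact Or.inl h
            · exact Or.inr h.symm
        _ ≤ μ {ω | T ω > q} + μ {ω | T ω = q} := measure_union_le _ _
        _ = μ {ω | T ω > q} := by rw [hTcont q, add_zero]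
    rw [← hgeset]
    refine ge_of_tendsto htend (Eventually.of_forall fun n => ?_)
    have h1 : (0:ℝ) < 1 / ((n : ℝ) + 1) := by positivity
    have hGt : α < G (q - 1 / (n + 1)) := h_lower _ (by linarith)
    have hF := abs_sub_le_iff.1 (hFG (q - 1 / (n + 1)))
    refine ENNReal.ofReal_le_of_le_toReal ?_
    have := hF.2
    linarith
  -- conclude
  have hub' : (μ {ω | T ω > q}).toReal ≤ α + Δ :=
    ENNReal.toReal_le_of_le_ofReal (by linarith) hub
  have hlb' : α - Δ ≤ (μ {ω | T ω > q}).toReal :=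
    (ENNReal.ofReal_le_iff_le_toReal (measure_ne_top μ _)).1 hlb
  rw [abs_sub_le_iff]
  constructor <;> linarith
end
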